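/- Let A, B be nonsingular d×d integer matrices and σ_1, σ_2 ∈ S_d such that φ(A·σ_1) = φ(B·σ_2) = (h_1,...,h_d) is sorted with h_1 = ... = h_{m_1} < h_{m_1+1} = ... = h_{m_1+m_2} < ... < h_d, where m_1 + ... + m_s = d. Let S_GCD = σ_2 · S_{(m_1,...,m_s)} · σ_1^{-1}, where S_{(m_1,...,m_s)} is the Young subgroup of S_d preserving the consecutive blocks of sizes m_1,...,m_s. Then A is UP-equivalent to B if and only if there exist U ∈ GL_d(Z) and τ ∈ S_GCD with UA = B·τ. -/

import Mathlib

lemma gcd_col_dvd_mul {d : ℕ} (U M : Matrix (Fin d) (Fin d) ℤ) (j : Fin d) :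
    (Finset.univ.gcd fun i => M i j) ∣ (Finset.univ.gcd fun i => (U * M) i j) := by
  apply Finset.dvd_gcd
  intro i _
  rw [Matrix.mul_apply]
  exact Finset.dvd_sum fun k _ =>
    Dvd.dvd.mul_left (Finset.gcd_dvd (Finset.mem_univ k)) _

lemma gcd_col_mul_unit {d : ℕ} (U M : Matrix (Fin d) (Fin d) ℤ)
    (hU : IsUnit U.det) (j : Fin d) :
    (Finset.univ.gcd fun i => (U * M) i j) = Finset.univ.gcd fun i => M i j := by
  refine dvd_antisymm_of_normalize_eq Finset.normalize_gcd Finset.normalize_gcd ?_ ?_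
  · have := gcd_col_dvd_mul U⁻¹ (U * M) j
    rwa [← Matrix.mul_assoc, Matrix.nonsing_inv_mul U hU, Matrix.one_mul] at this
  · exact gcd_col_dvd_mul U M j

/-- Suppose the sorted column-gcd vectors of `A ⋅ σ₁` and `B ⋅ σ₂` agree, equal to `h`,
whose blocks of equal values are encoded by the monotone surjection `b` (values are
constant on blocks and strictly increase between blocks).  Let
`S_GCD = σ₂ · S_{(m₁,…,m_s)} · σ₁⁻¹`, where the Young subgroup consists of the
permutations preserving each block of `b`.  Then `A ≃_UP B` iff `U A = B ⋅ τ` for some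
unimodular `U` and some `τ ∈ S_GCD`. -/
theorem stmt19 {d s : ℕ} (A B : Matrix (Fin d) (Fin d) ℤ)
    (hA : A.det ≠ 0) (hB : B.det ≠ 0)
    (σ₁ σ₂ : Equiv.Perm (Fin d))
    (b : Fin d → Fin s) (hbmono : Monotone b) (hbsurj : Function.Surjective b)
    (h : Fin d → ℤ)
    (hconst : ∀ i j : Fin d, b i = b j → h i = h j)
    (hstrict : ∀ i j : Fin d, b i < b j → h i < h j)
    (hφA : ∀ j, (Finset.univ.gcd fun i => (A.submatrix id ⇑σ₁) i j) = h j)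
    (hφB : ∀ j, (Finset.univ.gcd fun i => (B.submatrix id ⇑σ₂) i j) = h j) :
    (∃ U : Matrix (Fin d) (Fin d) ℤ, IsUnit U.det ∧
      ∃ σ : Equiv.Perm (Fin d), U * A = B.submatrix id ⇑σ) ↔
    (∃ U : Matrix (Fin d) (Fin d) ℤ, IsUnit U.det ∧
      ∃ τ : Equiv.Perm (Fin d), (∀ x, b ((σ₂⁻¹ * τ * σ₁) x) = b x) ∧
        U * A = B.submatrix id ⇑τ) := by
  constructor
  · rintro ⟨U, hU, σ, hUA⟩
    refine ⟨U, hU, σ, fun x => ?_, hUA⟩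
    -- first show h is preserved
    have hh : h ((σ₂⁻¹ * σ * σ₁) x) = h x := by
      have h1 : (Finset.univ.gcd fun i => A i (σ₁ x)) = h x := hφA x
      have h2 : (Finset.univ.gcd fun i => (U * A) i (σ₁ x)) = h x := by
        rw [gcd_col_mul_unit U A hU]; exact h1
      have h3 : (Finset.univ.gcd fun i => B i (σ (σ₁ x))) = h x := by
        rw [← h2]; congr 1; ext i; rw [hUA]; rfl
      have h4 := hφB (σ₂⁻¹ (σ (σ₁ x)))
      simp only [Matrix.submatrix_apply, id, (fun y => (Equiv.Perm.inv_eq_iff_eq.mp rfl).symm : ∀ y, σ₂ (σ₂⁻¹ y) = y)] at h4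
      show h (σ₂⁻¹ (σ (σ₁ x))) = h x
      rw [← h4, ← h3]
    -- b preserved from h preserved
    rcases lt_trichotomy (b ((σ₂⁻¹ * σ * σ₁) x)) (b x) with hlt | heq | hgt
    · exact absurd (hstrict _ _ hlt) (by rw [hh]; exact lt_irrefl _)
    · exact heq
    · exact absurd (hstrict _ _ hgt) (by rw [hh]; exact lt_irrefl _)
  · rintro ⟨U, hU, τ, _, hUA⟩
    exact ⟨U, hU, τ, hUA⟩
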